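/- Let p be an odd prime and let ρ : H_p → GL(V) be an irreducible complex representation of the discrete Heisenberg group H_p on a finite-dimensional complex vector space V with dim V > 1. Then dim V = p and ρ is faithful (injective). -/

import Mathlib

open Matrix

/-- The unitriangular matrix `M(a,b,c)`. -/
def Hmat (p : ℕ) (a b c : ZMod p) : Matrix (Fin 3) (Fin 3) (ZMod p) :=
  !![1, a, b; 0, 1, c; 0, 0, 1]

lemma Hmat_mul (p : ℕ) (a b c a' b' c' : ZMod p) :
    Hmat p a b c * Hmat p a' b' c' = Hmat p (a + a') (b + b' + a * c') (c + c') := by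
  simp only [Hmat, Matrix.mul_fin_three]
  congr 1 <;> ring

lemma Hmat_one (p : ℕ) : Hmat p 0 0 0 = 1 := by
  rw [Matrix.one_fin_three]; rfl

/-- `M(a,b,c)` as an element of `GL₃(𝔽_p)`. -/
def Hgl (p : ℕ) (a b c : ZMod p) : GL (Fin 3) (ZMod p) :=
  ⟨Hmat p a b c, Hmat p (-a) (a * c - b) (-c),
    by rw [Hmat_mul]; rw [show a + -a = 0 by ring, show b + (a*c-b) + a * -c = 0 by ring,
      show c + -c = 0 by ring, Hmat_one],
    by rw [Hmat_mul]; rw [show -a + a = 0 by ring, show (a*c-b) + b + -a * c = 0 by ring,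
      show -c + c = 0 by ring, Hmat_one]⟩

lemma Hgl_mul (p : ℕ) (a b c a' b' c' : ZMod p) :
    Hgl p a b c * Hgl p a' b' c' = Hgl p (a + a') (b + b' + a * c') (c + c') :=
  Units.ext (Hmat_mul p a b c a' b' c')

/-- The discrete Heisenberg group `H_p`: the subgroup of `GL₃(𝔽_p)` consisting of the
upper unitriangular matrices `M(a,b,c)`. -/
def Heisenberg (p : ℕ) : Subgroup (GL (Fin 3) (ZMod p)) where
  carrier := { g | ∃ a b c : ZMod p, g = Hgl p a b c }
  one_mem' := ⟨0, 0, 0, Units.ext (Hmat_one p).symm⟩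
  mul_mem' := by
    rintro g h ⟨a, b, c, rfl⟩ ⟨a', b', c', rfl⟩
    exact ⟨_, _, _, Hgl_mul p a b c a' b' c'⟩
  inv_mem' := by
    rintro g ⟨a, b, c, rfl⟩
    exact ⟨-a, a * c - b, -c, Units.ext rfl⟩

/-- The element `X = M(1,0,0)` of `H_p`. -/
def He.X (p : ℕ) : Heisenberg p := ⟨Hgl p 1 0 0, 1, 0, 0, rfl⟩

/-- The element `Y = M(0,0,1)` of `H_p`. -/
def He.Y (p : ℕ) : Heisenberg p := ⟨Hgl p 0 0 1, 0, 0, 1, rfl⟩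

/-- The element `Z = M(0,1,0)` of `H_p`. -/
def He.Z (p : ℕ) : Heisenberg p := ⟨Hgl p 0 1 0, 0, 1, 0, rfl⟩

/-- A complex representation `ρ : G → GL(V)` is irreducible if `V` is nonzero and has no
`G`-invariant subspaces other than `0` and `V`. -/
def IsIrreducibleRep {G V : Type*} [Group G] [AddCommGroup V] [Module ℂ V]
    (ρ : Representation ℂ G V) : Prop :=
  Nontrivial V ∧ ∀ W : Submodule ℂ V, (∀ g : G, ∀ v ∈ W, ρ g v ∈ W) → W = ⊥ ∨ W = ⊤

namespace He
variable {p : ℕ}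

lemma coe_mul (g h : Heisenberg p) : ((g * h : Heisenberg p) : GL (Fin 3) (ZMod p)) = (g : GL (Fin 3) (ZMod p)) * h := rfl

lemma X_pow (n : ℕ) : ((X p ^ n : Heisenberg p) : GL (Fin 3) (ZMod p)) = Hgl p (n : ZMod p) 0 0 := by
  induction n with
  | zero => rw [pow_zero, Nat.cast_zero]; exact Units.ext (Hmat_one p).symm
  | succ n ih =>
    rw [pow_succ, coe_mul, ih]
    show _ * Hgl p 1 0 0 = _
    rw [Hgl_mul]
    push_cast
    congr 1 <;> ring

lemma Y_pow (n : ℕ) : ((Y p ^ n : Heisenberg p) : GL (Fin 3) (ZMod p)) = Hgl p 0 0 (n : ZMod p) := by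
  induction n with
  | zero => rw [pow_zero, Nat.cast_zero]; exact Units.ext (Hmat_one p).symm
  | succ n ih =>
    rw [pow_succ, coe_mul, ih]
    show _ * Hgl p 0 0 1 = _
    rw [Hgl_mul]
    push_cast
    congr 1 <;> ring

lemma Z_pow (n : ℕ) : ((Z p ^ n : Heisenberg p) : GL (Fin 3) (ZMod p)) = Hgl p 0 (n : ZMod p) 0 := by
  induction n with
  | zero => rw [pow_zero, Nat.cast_zero]; exact Units.ext (Hmat_one p).symm
  | succ n ih =>
    rw [pow_succ, coe_mul, ih]
    show _ * Hgl p 0 1 0 = _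
    rw [Hgl_mul]
    push_cast
    congr 1 <;> ring

lemma Y_pow_p [NeZero p] : (Y p) ^ p = 1 := by
  apply Subtype.ext
  rw [Y_pow, ZMod.natCast_self]
  exact Units.ext (Hmat_one p)

lemma Z_pow_p [NeZero p] : (Z p) ^ p = 1 := by
  apply Subtype.ext
  rw [Z_pow, ZMod.natCast_self]
  exact Units.ext (Hmat_one p)

lemma Z_comm (g : Heisenberg p) : Z p * g = g * Z p := by
  obtain ⟨a, b, c, hg⟩ := g.2
  apply Subtype.ext
  rw [coe_mul, coe_mul, hg]
  show Hgl p 0 1 0 * _ = _ * Hgl p 0 1 0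
  rw [Hgl_mul, Hgl_mul]
  congr 1 <;> ring

lemma XY_rel : X p * Y p = Y p * X p * Z p := by
  apply Subtype.ext
  rw [coe_mul, coe_mul, coe_mul]
  show Hgl p 1 0 0 * Hgl p 0 0 1 = Hgl p 0 0 1 * Hgl p 1 0 0 * Hgl p 0 1 0
  rw [Hgl_mul, Hgl_mul, Hgl_mul]
  congr 1 <;> ring

lemma decomp [NeZero p] (g : Heisenberg p) (a b c : ZMod p)
    (h : (g : GL (Fin 3) (ZMod p)) = Hgl p a b c) :
    g = X p ^ a.val * Z p ^ (b - a * c).val * Y p ^ c.val := by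
  apply Subtype.ext
  rw [h, coe_mul, coe_mul, X_pow, Z_pow, Y_pow, ZMod.natCast_val, ZMod.natCast_val,
    ZMod.natCast_val, ZMod.cast_id, ZMod.cast_id, ZMod.cast_id, Hgl_mul, Hgl_mul]
  congr 1 <;> ring

end He
theorem Heisenberg_irreducible_rep_dim_and_faithful (p : ℕ) (hp : p.Prime) (hodd : Odd p)
    (V : Type) [AddCommGroup V] [Module ℂ V] [FiniteDimensional ℂ V]
    (ρ : Representation ℂ (Heisenberg p) V)
    (hirr : IsIrreducibleRep ρ) (hdim : 1 < Module.finrank ℂ V) :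
    Module.finrank ℂ V = p ∧ Function.Injective ρ := by
  haveI : NeZero p := ⟨hp.ne_zero⟩
  haveI hnt : Nontrivial V := hirr.1
  -- basic facts about ρ
  have mulapp : ∀ (g h : Heisenberg p) (v : V), ρ (g * h) v = ρ g (ρ h v) := by
    intro g h v; rw [_root_.map_mul]; rfl
  have hinv0 : ∀ (g : Heisenberg p) (v : V), ρ g v = 0 → v = 0 := by
    intro g v h
    have h2 : ρ (g⁻¹ * g) v = v := by rw [inv_mul_cancel, _root_.map_one, Module.End.one_apply]
    rw [mulapp, h, _root_.map_zero] at h2; exact h2.symm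
  have stabpow : ∀ (W : Submodule ℂ V) (g : Heisenberg p), (∀ v ∈ W, ρ g v ∈ W) →
      ∀ (n : ℕ), ∀ v ∈ W, ρ (g ^ n) v ∈ W := by
    intro W g hg n
    induction n with
    | zero => intro v hv; rw [pow_zero, _root_.map_one, Module.End.one_apply]; exact hv
    | succ n ih => intro v hv; rw [pow_succ, mulapp]; exact ih _ (hg v hv)
  have stab : ∀ (W : Submodule ℂ V),
      (∀ v ∈ W, ρ (He.X p) v ∈ W) → (∀ v ∈ W, ρ (He.Y p) v ∈ W) →
      (∀ v ∈ W, ρ (He.Z p) v ∈ W) →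
      ∀ (g : Heisenberg p), ∀ v ∈ W, ρ g v ∈ W := by
    intro W hX hY hZ g v hv
    obtain ⟨a, b, c, hg⟩ := g.2
    rw [He.decomp g a b c hg, mulapp, mulapp]
    exact stabpow W _ hX _ _ (stabpow W _ hZ _ _ (stabpow W _ hY _ _ hv))
  have span_stab : ∀ (s : Set V) (f : V →ₗ[ℂ] V),
      (∀ x ∈ s, f x ∈ Submodule.span ℂ s) → ∀ v ∈ Submodule.span ℂ s, f v ∈ Submodule.span ℂ s := by
    intro s f hf v hv
    have hle : Submodule.map f (Submodule.span ℂ s) ≤ Submodule.span ℂ s := by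
      rw [Submodule.map_span, Submodule.span_le]
      rintro _ ⟨x, hx, rfl⟩; exact hf x hx
    exact hle (Submodule.mem_map_of_mem hv)
  -- Z acts by a scalar ω
  obtain ⟨ω, hω⟩ := Module.End.exists_eigenvalue (ρ (He.Z p))
  have hZscal : ∀ v : V, ρ (He.Z p) v = ω • v := by
    have hinvE : ∀ (g : Heisenberg p), ∀ v ∈ Module.End.eigenspace (ρ (He.Z p)) ω,
        ρ g v ∈ Module.End.eigenspace (ρ (He.Z p)) ω := by
      intro g v hv
      rw [Module.End.mem_eigenspace_iff] at hv ⊢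
      rw [← mulapp, He.Z_comm, mulapp, hv, _root_.map_smul]
    rcases hirr.2 _ hinvE with h | h
    · exact (hω h).elim
    · intro v
      exact Module.End.mem_eigenspace_iff.mp (h ▸ Submodule.mem_top)
  have hZpow : ∀ (n : ℕ) (v : V), ρ (He.Z p ^ n) v = ω ^ n • v := by
    intro n
    induction n with
    | zero => intro v; rw [pow_zero, _root_.map_one, pow_zero, one_smul, Module.End.one_apply]
    | succ n ih =>
      intro v
      rw [pow_succ, mulapp, hZscal, _root_.map_smul, ih, smul_smul, ← pow_succ']
  have hωp : ω ^ p = 1 := by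
    obtain ⟨v, hv⟩ := exists_ne (0 : V)
    have h1 : ρ (He.Z p ^ p) v = v := by rw [He.Z_pow_p, _root_.map_one, Module.End.one_apply]
    rw [hZpow] at h1
    have h2 : (ω ^ p - 1) • v = 0 := by rw [sub_smul, one_smul, h1, sub_self]
    rcases smul_eq_zero.mp h2 with h | h
    · exact sub_eq_zero.mp h
    · exact absurd h hv
  -- ω ≠ 1 (otherwise every ρ g would be scalar)
  have hωne1 : ω ≠ 1 := by
    intro hω1
    have hZid : ∀ v : V, ρ (He.Z p) v = v := by intro v; rw [hZscal, hω1, one_smul]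
    have hZinvid : ∀ v : V, ρ (He.Z p)⁻¹ v = v := by
      intro v
      have h2 : ρ ((He.Z p)⁻¹ * He.Z p) v = v := by
        rw [inv_mul_cancel, _root_.map_one, Module.End.one_apply]
      rw [mulapp, hZid] at h2; exact h2
    -- ρ X is scalar
    obtain ⟨ξ, hξ⟩ := Module.End.exists_eigenvalue (ρ (He.X p))
    have hXscal : ∀ v : V, ρ (He.X p) v = ξ • v := by
      have hstE : ∀ (g : Heisenberg p), ∀ v ∈ Module.End.eigenspace (ρ (He.X p)) ξ,
          ρ g v ∈ Module.End.eigenspace (ρ (He.X p)) ξ := by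
        apply stab
        · intro v hv
          rw [Module.End.mem_eigenspace_iff] at hv ⊢
          rw [hv, _root_.map_smul, hv]
        · intro v hv
          rw [Module.End.mem_eigenspace_iff] at hv ⊢
          rw [← mulapp, He.XY_rel, mulapp, mulapp, hZid, hv, _root_.map_smul]
        · intro v hv; rw [hZid]; exact hv
      rcases hirr.2 _ hstE with h | h
      · exact (hξ h).elim
      · intro v
        exact Module.End.mem_eigenspace_iff.mp (h ▸ Submodule.mem_top)
    -- ρ Y is scalar
    have hYX_rel : He.Y p * He.X p = He.X p * He.Y p * (He.Z p)⁻¹ := by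
      rw [He.XY_rel, mul_assoc, mul_inv_cancel, mul_one]
    obtain ⟨η, hη⟩ := Module.End.exists_eigenvalue (ρ (He.Y p))
    have hYscal : ∀ v : V, ρ (He.Y p) v = η • v := by
      have hstE : ∀ (g : Heisenberg p), ∀ v ∈ Module.End.eigenspace (ρ (He.Y p)) η,
          ρ g v ∈ Module.End.eigenspace (ρ (He.Y p)) η := by
        apply stab
        · intro v hv
          rw [Module.End.mem_eigenspace_iff] at hv ⊢
          rw [← mulapp, hYX_rel, mulapp, mulapp, hZinvid, hv, _root_.map_smul]
        · intro v hv
          rw [Module.End.mem_eigenspace_iff] at hv ⊢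
          rw [hv, _root_.map_smul, hv]
        · intro v hv; rw [hZid]; exact hv
      rcases hirr.2 _ hstE with h | h
      · exact (hη h).elim
      · intro v
        exact Module.End.mem_eigenspace_iff.mp (h ▸ Submodule.mem_top)
    -- every line is invariant : contradiction with dim > 1
    obtain ⟨v, hv⟩ := exists_ne (0 : V)
    have hstW : ∀ (g : Heisenberg p), ∀ u ∈ Submodule.span ℂ {v}, ρ g u ∈ Submodule.span ℂ {v} := by
      apply stab
      · intro u hu; rw [hXscal]; exact Submodule.smul_mem _ _ hu
      · intro u hu; rw [hYscal]; exact Submodule.smul_mem _ _ hu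
      · intro u hu; rw [hZid]; exact hu
    rcases hirr.2 _ hstW with h | h
    · exact hv (by
        have hm : v ∈ Submodule.span ℂ {v} := Submodule.mem_span_singleton_self v
        rw [h] at hm
        exact (Submodule.mem_bot ℂ).mp hm)
    · have h1 : Module.finrank ℂ ↥(Submodule.span ℂ {v}) = 1 := finrank_span_singleton hv
      rw [h] at h1
      rw [finrank_top ℂ V] at h1
      omega
  -- ω is a primitive p-th root of unity
  have hord : orderOf ω = p := by
    rcases hp.eq_one_or_self_of_dvd _ (orderOf_dvd_of_pow_eq_one hωp) with h | h
    · exact absurd (orderOf_eq_one_iff.mp h) hωne1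
    · exact h
  have hω0 : ω ≠ 0 := by
    intro h; rw [h, zero_pow hp.ne_zero] at hωp; exact zero_ne_one hωp
  have hωinj : ∀ i j : ℕ, i < p → j < p → ω ^ i = ω ^ j → i = j := by
    have key : ∀ i j : ℕ, i ≤ j → j < p → ω ^ i = ω ^ j → i = j := by
      intro i j hij hj h
      have h1 : ω ^ i * ω ^ (j - i) = ω ^ i * 1 := by
        rw [← pow_add, mul_one, show i + (j - i) = j by omega, h]
      have h2 : ω ^ (j - i) = 1 := mul_left_cancel₀ (pow_ne_zero i hω0) h1
      have h3 := orderOf_dvd_of_pow_eq_one h2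
      rw [hord] at h3
      have := Nat.eq_zero_of_dvd_of_lt h3 (by omega)
      omega
    intro i j hi hj h
    rcases le_total i j with hle | hle
    · exact key i j hle hj h
    · exact (key j i hle hi h.symm).symm
  -- eigenvector of X
  obtain ⟨lam, hlam⟩ := Module.End.exists_eigenvalue (ρ (He.X p))
  obtain ⟨v, hvE, hv0⟩ := hlam.exists_hasEigenvector
  have hXv : ρ (He.X p) v = lam • v := Module.End.mem_eigenspace_iff.mp hvE
  have hlam0 : lam ≠ 0 := by
    intro h
    exact hv0 (hinv0 (He.X p) v (by rw [hXv, h, zero_smul]))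
  -- the orbit of v under Y
  set w : ℕ → V := fun k => ρ (He.Y p ^ k) v with hwdef
  have hw0 : w 0 = v := by rw [hwdef]; simp only [pow_zero, _root_.map_one, Module.End.one_apply]
  have hwsucc : ∀ k : ℕ, w (k + 1) = ρ (He.Y p) (w k) := by
    intro k
    rw [hwdef]
    simp only []
    rw [pow_succ', mulapp]
  have hwX : ∀ k : ℕ, ρ (He.X p) (w k) = (lam * ω ^ k) • w k := by
    intro k
    induction k with
    | zero => rw [hw0, pow_zero, mul_one, hXv]
    | succ k ih =>
      have h1 : ρ (He.X p) (w (k + 1)) = ω • ρ (He.Y p) (ρ (He.X p) (w k)) := by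
        rw [hwsucc, ← mulapp, He.XY_rel, mulapp, mulapp, hZscal, _root_.map_smul, _root_.map_smul]
      rw [h1, ih, _root_.map_smul, ← hwsucc, smul_smul]
      congr 1; ring
  have hwne : ∀ k : ℕ, w k ≠ 0 := by
    intro k h
    exact hv0 (hinv0 (He.Y p ^ k) v h)
  have hwper : ∀ k : ℕ, w (k + p) = w k := by
    intro k
    rw [hwdef]
    simp only []
    rw [pow_add, mulapp, He.Y_pow_p, _root_.map_one, Module.End.one_apply]
  have hcancel : ∀ (x y : ℂ) (k : ℕ), x • w k = y • w k → x = y := by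
    intro x y k h
    have h2 : (x - y) • w k = 0 := by rw [sub_smul, h, sub_self]
    rcases smul_eq_zero.mp h2 with h' | h'
    · exact sub_eq_zero.mp h'
    · exact absurd h' (hwne k)
  -- linear independence
  have hμinj : Function.Injective (fun k : Fin p => lam * ω ^ (k : ℕ)) := by
    intro i j h
    exact Fin.ext (hωinj _ _ i.2 j.2 (mul_left_cancel₀ hlam0 h))
  have hli : LinearIndependent ℂ (fun k : Fin p => w k) :=
    Module.End.eigenvectors_linearIndependent' (ρ (He.X p)) (fun k : Fin p => lam * ω ^ (k : ℕ))
      hμinj _ (fun k => ⟨Module.End.mem_eigenspace_iff.mpr (hwX k), hwne k⟩)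
  -- the span of the orbit
  set W : Submodule ℂ V := Submodule.span ℂ (Set.range fun k : Fin p => w k) with hWdef
  have hmemW : ∀ k : ℕ, w k ∈ W := by
    intro k
    induction k using Nat.strong_induction_on with
    | _ k ih =>
      by_cases hk : k < p
      · exact Submodule.subset_span ⟨⟨k, hk⟩, rfl⟩
      · have hk2 : k - p + p = k := by omega
        rw [← hk2, hwper]
        exact ih (k - p) (by have := hp.pos; omega)
  have hstabW : ∀ (g : Heisenberg p), ∀ u ∈ W, ρ g u ∈ W := by
    apply stab
    · apply span_stab
      intro x hx; obtain ⟨k, rfl⟩ := hx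
      rw [hwX]; exact Submodule.smul_mem _ _ (hmemW k)
    · apply span_stab
      intro x hx; obtain ⟨k, rfl⟩ := hx
      rw [← hwsucc]; exact hmemW _
    · apply span_stab
      intro x hx; obtain ⟨k, rfl⟩ := hx
      rw [hZscal]; exact Submodule.smul_mem _ _ (hmemW k)
  have hWtop : W = ⊤ := by
    rcases hirr.2 W hstabW with h | h
    · exfalso
      have hm := hmemW 0
      rw [h] at hm
      exact hwne 0 ((Submodule.mem_bot ℂ).mp hm)
    · exact h
  have hrank : Module.finrank ℂ V = p := by
    have b : Module.Basis (Fin p) ℂ V := Module.Basis.mk hli (by rw [← hWdef, hWtop])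
    rw [Module.finrank_eq_card_basis b, Fintype.card_fin]
  -- faithfulness
  have hXpowapp : ∀ (A m : ℕ), ρ (He.X p ^ A) (w m) = (lam * ω ^ m) ^ A • w m := by
    intro A m
    induction A with
    | zero => rw [pow_zero, _root_.map_one, pow_zero, one_smul, Module.End.one_apply]
    | succ A ih =>
      rw [pow_succ, mulapp, hwX, _root_.map_smul, ih, smul_smul]
      congr 1; ring
  have hYpowapp : ∀ (C k : ℕ), ρ (He.Y p ^ C) (w k) = w (k + C) := by
    intro C k
    conv_rhs => rw [hwdef]
    simp only []
    rw [add_comm k C, pow_add, mulapp]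
  have key : ∀ g : Heisenberg p, ρ g = 1 → g = 1 := by
    intro g hg1
    obtain ⟨a, b, c, hgval⟩ := g.2
    have hgd := He.decomp g a b c hgval
    have happ0 : ∀ k : ℕ, ρ g (w k) = w k := by
      intro k; rw [hg1, Module.End.one_apply]
    have happ : ∀ k : ℕ,
        w k = (ω ^ (b - a * c).val * (lam * ω ^ (k + c.val)) ^ a.val) • w (k + c.val) := by
      intro k
      have h := happ0 k
      rw [hgd, mulapp, mulapp, hYpowapp, hZpow, _root_.map_smul, hXpowapp, smul_smul] at h
      exact h.symm
    obtain ⟨s0, h0⟩ : ∃ s : ℂ, w 0 = s • w (0 + c.val) := ⟨_, happ 0⟩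
    rw [zero_add] at h0
    have h1 := congrArg (⇑(ρ (He.X p))) h0
    rw [hwX 0, _root_.map_smul, hwX c.val, smul_smul] at h1
    have h2 : (s0 * (lam * ω ^ c.val)) • w c.val = (lam * ω ^ c.val) • w 0 := by
      rw [h0, smul_smul]; congr 1; ring
    have h3 := hcancel _ _ 0 (h1.trans h2)
    have hC0 : c.val = 0 :=
      (hωinj 0 c.val hp.pos (ZMod.val_lt c) (mul_left_cancel₀ hlam0 h3)).symm
    have hc : c = 0 := (ZMod.val_eq_zero c).mp hC0
    have hs : ∀ k : ℕ, ω ^ (b - a * c).val * (lam * ω ^ k) ^ a.val = 1 := by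
      intro k
      have h4 := happ k
      rw [hC0, add_zero] at h4
      exact (hcancel _ _ k (by rw [← h4, one_smul])).symm
    have e0 := hs 0
    have e1 := hs 1
    rw [pow_zero, mul_one] at e0
    rw [pow_one, mul_pow] at e1
    have hA1 : ω ^ a.val = 1 := by
      have h5 : (ω ^ (b - a * c).val * lam ^ a.val) * ω ^ a.val = 1 := by rw [← e1]; ring
      rw [e0, one_mul] at h5; exact h5
    have hA0 : a.val = 0 := hωinj a.val 0 (ZMod.val_lt a) hp.pos (by rw [hA1, pow_zero])
    have ha : a = 0 := (ZMod.val_eq_zero a).mp hA0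
    have hB1 : ω ^ (b - a * c).val = 1 := by
      rw [hA0, pow_zero, mul_one] at e0; exact e0
    have hB0 : (b - a * c).val = 0 := hωinj _ 0 (ZMod.val_lt _) hp.pos (by rw [hB1, pow_zero])
    have hb : b = 0 := by
      have h6 : b - a * c = 0 := (ZMod.val_eq_zero _).mp hB0
      rw [ha, zero_mul, sub_zero] at h6; exact h6
    apply Subtype.ext
    rw [hgval, ha, hb, hc]
    exact Units.ext (Hmat_one p)
  refine ⟨hrank, ?_⟩
  intro g h hgh
  have h1 : ρ (g * h⁻¹) = 1 := by
    rw [_root_.map_mul, hgh, ← _root_.map_mul, mul_inv_cancel, _root_.map_one]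
  exact mul_inv_eq_one.mp (key _ h1)
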